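/- The space of infinitesimal deformations of a G₂-instanton A on a principal bundle over a nearly G₂ manifold (i.e., solutions ε of (d^A ε)·η = 0, (d^A)*ε = 0) is isomorphic to the kernel of the elliptic operator D^{−1,A} + 2·Id acting on Γ(Λ¹ ⊗ Ad P). -/
import Mathlib


/-- **Deformation space as a kernel.**  The space of infinitesimal deformations
of a G₂-instanton `A` on a principal bundle over a nearly G₂ manifold — i.e. the
solutions `ε` of `(d^A ε)·η = 0`, `(d^A)*ε = 0` — coincides (under the injective
identification `ε ↦ ε·η`) with the kernel of the elliptic operator
`D^{−1,A} + 2·Id` acting on `Γ(Λ¹ ⊗ Ad P)`.  Since `η` is parallel for `∇^{−1}`,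
`D^{−1,A}` restricts to an operator `Dm1` on `Λ¹ ⊗ Ad P` via
`(D^{−1,A}ε)·η = D^{−1,A}(ε·η) = D^{0,A}(ε·η) − (1/2)φ·(ε·η)`. -/
theorem deformation_space_eq_kernel {Ω0 Ω1 Ω2 S : Type*}
    [AddCommGroup Ω0] [Module ℝ Ω0] [AddCommGroup Ω1] [Module ℝ Ω1]
    [AddCommGroup Ω2] [Module ℝ Ω2] [AddCommGroup S] [Module ℝ S]
    (dA : Ω1 →ₗ[ℝ] Ω2) (δA : Ω1 →ₗ[ℝ] Ω0)
    (c0 : Ω0 →ₗ[ℝ] S) (c1 : Ω1 →ₗ[ℝ] S) (c2 : Ω2 →ₗ[ℝ] S)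
    (D0 : S →ₗ[ℝ] S) (cφ : S →ₗ[ℝ] S)
    (Dm1 : Ω1 →ₗ[ℝ] Ω1)
    (hD0 : ∀ ε, D0 (c1 ε) = c2 (dA ε) + c0 (δA ε) - (5/2 : ℝ) • c1 ε)
    (hφ : ∀ ε, cφ (c1 ε) = -(c1 ε))
    (hcompl : ∀ (β : Ω2) (f : Ω0), c2 β + c0 f = 0 → c2 β = 0 ∧ c0 f = 0)
    (hc0inj : ∀ f, c0 f = 0 → f = 0)
    (hc1inj : Function.Injective c1)
    (hDm1 : ∀ ε, c1 (Dm1 ε) = D0 (c1 ε) + ((-1 : ℝ)/2) • cφ (c1 ε)) :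
    ∀ ε : Ω1, (c2 (dA ε) = 0 ∧ δA ε = 0) ↔ Dm1 ε + (2 : ℝ) • ε = 0 := by
  intro ε
  have key : c1 (Dm1 ε + (2:ℝ) • ε) = c2 (dA ε) + c0 (δA ε) := by
    rw [map_add, map_smul, hDm1, hD0, hφ]
    module
  constructor
  · rintro ⟨h2, h0⟩
    apply hc1inj
    rw [key, h2, h0, map_zero, map_zero, add_zero]
  · intro h
    have := hcompl (dA ε) (δA ε) (by rw [← key, h, map_zero])
    exact ⟨this.1, hc0inj _ this.2⟩
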